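/- (Brinks–Landwehr PDE for the age-specific prevalence, along characteristics.) Let i, m0, m1* : ℝ → ℝ, and let S, C* : ℝ → ℝ be differentiable with S(a) > 0 and C*(a) ≥ 0 for all a, satisfying S'(a) = -(m0(a) + i(a))·S(a) and (C*)'(a) = -m1*(a)·C*(a) + i(a)·S(a). Define the prevalence p(a) := C*(a) / (S(a) + C*(a)). Then p is differentiable and for every a: p'(a) = (1 - p(a)) · ( i(a) - p(a)·(m1*(a) - m0(a)) ). -/

import Mathlib

/-- Brinks–Landwehr PDE for the age-specific prevalence along characteristics:
`p' = (1 - p)·(i - p·(m1* - m0))` for `p = C*/(S + C*)`. -/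
theorem prevalence_pde_along_characteristics
    (i m0 m1s S Cs : ℝ → ℝ)
    (hS : Differentiable ℝ S) (hCs : Differentiable ℝ Cs)
    (hSpos : ∀ a, 0 < S a) (hCnn : ∀ a, 0 ≤ Cs a)
    (hSode : ∀ a, deriv S a = -(m0 a + i a) * S a)
    (hCode : ∀ a, deriv Cs a = -m1s a * Cs a + i a * S a) :
    Differentiable ℝ (fun a => Cs a / (S a + Cs a)) ∧
    ∀ a, deriv (fun a => Cs a / (S a + Cs a)) a =
      (1 - Cs a / (S a + Cs a)) *
        (i a - (Cs a / (S a + Cs a)) * (m1s a - m0 a)) := by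
  have hden : ∀ a, S a + Cs a ≠ 0 := fun a =>
    ne_of_gt (add_pos_of_pos_of_nonneg (hSpos a) (hCnn a))
  have hdiff : Differentiable ℝ (fun a => Cs a / (S a + Cs a)) :=
    hCs.div (hS.add hCs) hden
  refine ⟨hdiff, fun a => ?_⟩
  have h1 : deriv (fun a => Cs a / (S a + Cs a)) a =
      (deriv Cs a * (S a + Cs a) - Cs a * (deriv S a + deriv Cs a)) /
        (S a + Cs a) ^ 2 := by
    rw [deriv_fun_div (d := fun x => S x + Cs x) (hCs a) ((hS.add hCs) a) (hden a), deriv_fun_add (hS a) (hCs a)]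
  rw [h1, hSode, hCode]
  have hd := hden a
  field_simp
  ring
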